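/- Let G be a finite simple connected graph with exactly n ≥ 4 edges whose boundary B(G) (the set of vertices of degree one) is nonempty. Then λ_{1,1}(G) ≥ 1/(n-1). -/
import Mathlib


open scoped Classical

noncomputable section

/-- The term `|f x - f y| ^ p` as a function on unordered pairs. -/
noncomputable def edgeTerm {V : Type*} (p : ℝ) (f : V → ℝ) : Sym2 V → ℝ :=
  Sym2.lift ⟨fun x y => |f x - f y| ^ p, fun x y => by dsimp only; rw [abs_sub_comm]⟩

/-- The `p`-Rayleigh quotient of a function on a finite graph. -/
noncomputable def rayleigh {V : Type*} [Fintype V] [DecidableEq V] (G : SimpleGraph V)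
    (p : ℝ) (f : V → ℝ) : ℝ :=
  (∑ e ∈ G.edgeFinset, edgeTerm p f e) / ∑ v, |f v| ^ p

/-- The first `p`-Dirichlet eigenvalue: infimum of the Rayleigh quotient over nonzero
functions vanishing on the boundary (vertices of degree one). -/
noncomputable def lambda1 {V : Type*} [Fintype V] [DecidableEq V] (G : SimpleGraph V)
    (p : ℝ) : ℝ :=
  sInf {r | ∃ f : V → ℝ, f ≠ 0 ∧ (∀ v, G.degree v = 1 → f v = 0) ∧ r = rayleigh G p f}

/-- The tadpole graph `T_{n,i}` on vertices `0,…,n-1` (vertex `t_k` is `k-1`):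
edges `t_k t_{k+1}` for `1 ≤ k ≤ n-1` together with the edge `t_1 t_i`. -/
def tadpole (n i : ℕ) : SimpleGraph (Fin n) :=
  SimpleGraph.fromRel (fun a b => a.val + 1 = b.val ∨ (a.val = 0 ∧ b.val = i - 1))

/-- The path graph on `n` vertices `0,…,n-1`. -/
def pathG (n : ℕ) : SimpleGraph (Fin n) :=
  SimpleGraph.fromRel (fun a b : Fin n => a.val + 1 = b.val)

/-- The set of edges of `G` with exactly one endpoint in `U`. -/
noncomputable def crossEdges {V : Type*} [Fintype V] [DecidableEq V] (G : SimpleGraph V)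
    (U : Finset V) : Finset (Sym2 V) :=
  G.edgeFinset.filter fun e =>
    Sym2.lift ⟨fun x y => (x ∈ U ∧ y ∉ U) ∨ (x ∉ U ∧ y ∈ U),
      fun x y => by simp only [eq_iff_iff]; tauto⟩ e

/-- The Dirichlet Cheeger constant: infimum of `|E(U,Uᶜ)|/|U|` over nonempty sets `U`
of interior vertices (vertices of degree at least two). -/
noncomputable def dCheeger {V : Type*} [Fintype V] [DecidableEq V] (G : SimpleGraph V) : ℝ :=
  sInf {r | ∃ U : Finset V, U.Nonempty ∧ (∀ v ∈ U, 2 ≤ G.degree v) ∧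
    r = ((crossEdges G U).card : ℝ) / U.card}

lemma edgeTerm_mk {V : Type*} (f : V → ℝ) (x y : V) :
    edgeTerm 1 f s(x, y) = |f x - f y| := by
  simp [edgeTerm]

lemma edgeTerm_nonneg {V : Type*} (f : V → ℝ) (e : Sym2 V) : 0 ≤ edgeTerm 1 f e := by
  induction e using Sym2.ind with
  | _ x y => rw [edgeTerm_mk]; positivity

lemma walk_bound {V : Type*} (G : SimpleGraph V) (f : V → ℝ) {v w : V} (p : G.Walk v w) :
    |f v - f w| ≤ (p.edges.map (edgeTerm 1 f)).sum := by
  induction p with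
  | nil => simp
  | @cons u x w h q ih =>
      rw [SimpleGraph.Walk.edges_cons, List.map_cons, List.sum_cons, edgeTerm_mk]
      calc |f u - f w| ≤ |f u - f x| + |f x - f w| := abs_sub_le _ _ _
        _ ≤ |f u - f x| + (q.edges.map (edgeTerm 1 f)).sum := by linarith

lemma reach_bound {V : Type*} [Fintype V] [DecidableEq V] (G : SimpleGraph V) (f : V → ℝ)
    {v w : V} (h : G.Reachable v w) :
    |f v - f w| ≤ ∑ e ∈ G.edgeFinset, edgeTerm 1 f e := by
  obtain ⟨q⟩ := h
  obtain ⟨p, hp⟩ := q.toPath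
  have h1 := walk_bound G f p
  rw [← List.sum_toFinset _ hp.edges_nodup] at h1
  refine h1.trans (Finset.sum_le_sum_of_subset_of_nonneg ?_ fun e _ _ => edgeTerm_nonneg f e)
  intro e he
  rw [SimpleGraph.mem_edgeFinset]
  exact p.edges_subset_edgeSet (List.mem_toFinset.mp he)

/-- Faber–Krahn inequality for the first `1`-Dirichlet eigenvalue of a graph
with `n` edges. -/
theorem faber_krahn_p_one {V : Type*} [Fintype V] [DecidableEq V] (G : SimpleGraph V)
    (n : ℕ) (hn : 4 ≤ n) (hcard : G.edgeFinset.card = n) (hconn : G.Connected)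
    (hbd : ∃ v, G.degree v = 1) :
    lambda1 G 1 ≥ 1 / ((n : ℝ) - 1) := by
  classical
  obtain ⟨b, hb⟩ := hbd
  -- there is an edge, hence two adjacent vertices
  have hedge : ∃ a c : V, G.Adj a c := by
    have hne : G.edgeFinset.Nonempty := by rw [← Finset.card_pos, hcard]; omega
    obtain ⟨e, he⟩ := hne
    induction e using Sym2.ind with
    | _ a c => exact ⟨a, c, SimpleGraph.mem_edgeFinset.mp he⟩
  -- every vertex has positive degree
  have hdegpos : ∀ v : V, 0 < G.degree v := by
    intro v
    rw [SimpleGraph.degree_pos_iff_exists_adj]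
    obtain ⟨a, c, hac⟩ := hedge
    by_cases hva : v = a
    · exact ⟨c, hva ▸ hac⟩
    · obtain ⟨p⟩ := hconn.preconnected v a
      cases p with
      | nil => exact absurd rfl hva
      | cons h q => exact ⟨_, h⟩
  set L : Finset V := Finset.univ.filter (fun v => G.degree v = 1) with hL
  set I : Finset V := Finset.univ.filter (fun v => G.degree v ≠ 1) with hI
  have hbL : b ∈ L := by simp [hL, hb]
  have hsum : ∑ v ∈ L, G.degree v + ∑ v ∈ I, G.degree v = 2 * n := by
    rw [Finset.sum_filter_add_sum_filter_not, SimpleGraph.sum_degrees_eq_twice_card_edges, hcard]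
  have hLsum : ∑ v ∈ L, G.degree v = L.card := by
    rw [Finset.sum_congr rfl (fun v hv => by simpa [hL] using (Finset.mem_filter.mp hv).2)]
    simp
  have hIsum : 2 * I.card ≤ ∑ v ∈ I, G.degree v := by
    calc 2 * I.card = ∑ _v ∈ I, 2 := by rw [Finset.sum_const]; ring
      _ ≤ ∑ v ∈ I, G.degree v := Finset.sum_le_sum (fun v hv => by
          have h1 := (Finset.mem_filter.mp hv).2
          have h2 := hdegpos v
          omega)
  have hLpos : 1 ≤ L.card := Finset.card_pos.mpr ⟨b, hbL⟩
  have hIcard : I.card ≤ n - 1 := by omega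
  -- there is an interior vertex
  have hint : ∃ v : V, G.degree v ≠ 1 := by
    by_contra hall
    push_neg at hall
    obtain ⟨u, hu⟩ := (SimpleGraph.degree_pos_iff_exists_adj G b).mp (hdegpos b)
    have huniq : ∀ x y z : V, G.Adj x y → G.Adj x z → y = z := by
      intro x y z hy hz
      refine (Finset.card_le_one (s := G.neighborFinset x)).mp ?_ y ?_ z ?_
      · rw [SimpleGraph.card_neighborFinset_eq_degree, hall x]
      · rwa [SimpleGraph.mem_neighborFinset]
      · rwa [SimpleGraph.mem_neighborFinset]
    have hwalk : ∀ {x w : V} (p : G.Walk x w), (x = b ∨ x = u) → (w = b ∨ w = u) := by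
      intro x w p
      induction p with
      | nil => exact id
      | cons h q ih =>
          intro hx
          apply ih
          rcases hx with rfl | rfl
          · exact Or.inr (huniq _ _ _ h hu)
          · exact Or.inl (huniq _ _ _ h hu.symm)
    have hsub : (Finset.univ : Finset V) ⊆ {b, u} := by
      intro w _
      obtain ⟨p⟩ := hconn.preconnected b w
      rcases hwalk p (Or.inl rfl) with rfl | rfl <;> simp
    have hcV : Fintype.card V ≤ 2 :=
      le_trans (Finset.card_le_card hsub) (le_trans (Finset.card_insert_le _ _) (by simp))
    have hdeg : ∑ v, G.degree v = Fintype.card V := by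
      rw [Finset.sum_congr rfl (fun v _ => hall v)]; simp
    rw [SimpleGraph.sum_degrees_eq_twice_card_edges, hcard] at hdeg
    omega
  rw [ge_iff_le, lambda1]
  apply le_csInf
  · obtain ⟨v0, hv0⟩ := hint
    refine ⟨rayleigh G 1 (fun v => if v = v0 then 1 else 0), fun v => if v = v0 then 1 else 0,
      ?_, ?_, rfl⟩
    · intro h
      have := congrFun h v0
      simp at this
    · intro v hv
      have : v ≠ v0 := fun h => hv0 (h ▸ hv)
      simp [this]
  · rintro r ⟨f, hf0, hvan, rfl⟩
    set S := ∑ e ∈ G.edgeFinset, edgeTerm 1 f e with hS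
    have hS0 : 0 ≤ S := Finset.sum_nonneg fun e _ => edgeTerm_nonneg f e
    have hfb : f b = 0 := hvan b hb
    have hub : ∀ v : V, |f v| ≤ S := by
      intro v
      have := reach_bound G f (hconn.preconnected v b)
      rwa [hfb, sub_zero] at this
    have hDeq : ∑ v, |f v| ^ (1 : ℝ) = ∑ v, |f v| := by
      refine Finset.sum_congr rfl fun v _ => Real.rpow_one _
    have hDI : ∑ v, |f v| = ∑ v ∈ I, |f v| := by
      refine (Finset.sum_subset (Finset.subset_univ I) ?_).symm
      intro x _ hx
      have : G.degree x = 1 := by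
        by_contra h
        exact hx (by simp [hI, h])
      simp [hvan x this]
    have hD1 : ∑ v, |f v| ≤ (I.card : ℝ) * S := by
      rw [hDI]
      calc ∑ v ∈ I, |f v| ≤ ∑ _v ∈ I, S := Finset.sum_le_sum fun v _ => hub v
        _ = (I.card : ℝ) * S := by rw [Finset.sum_const, nsmul_eq_mul]
    have hIcast : (I.card : ℝ) ≤ (n : ℝ) - 1 := by
      have : (I.card : ℝ) ≤ ((n - 1 : ℕ) : ℝ) := Nat.cast_le.mpr hIcard
      rwa [Nat.cast_sub (by omega), Nat.cast_one] at this
    have hDpos : 0 < ∑ v, |f v| := by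
      obtain ⟨v0, hv0⟩ := Function.ne_iff.mp hf0
      have h1 : 0 < |f v0| := abs_pos.mpr hv0
      have h2 := Finset.single_le_sum (f := fun v => |f v|) (fun v _ => abs_nonneg _)
        (Finset.mem_univ v0)
      linarith
    have hnpos : (0:ℝ) < (n:ℝ) - 1 := by
      have h4 : (4:ℝ) ≤ (n:ℝ) := by exact_mod_cast hn
      linarith
    rw [rayleigh, hDeq]
    rw [div_le_div_iff₀ hnpos hDpos]
    have : (I.card : ℝ) * S ≤ ((n:ℝ) - 1) * S := mul_le_mul_of_nonneg_right hIcast hS0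
    calc 1 * ∑ v, |f v| = ∑ v, |f v| := one_mul _
      _ ≤ (I.card : ℝ) * S := hD1
      _ ≤ ((n:ℝ) - 1) * S := this
      _ = (∑ e ∈ G.edgeFinset, edgeTerm 1 f e) * ((n:ℝ) - 1) := by rw [← hS]; ring
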